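/- Fix h ∈ ℝ. Let M(I) denote the set of monotone nondecreasing left-continuous real-valued functions on an interval I. Define the concatenation map C_h : M(−∞,0) × M(0,∞) → M(−∞,∞) by C_h(f,g)(x) = f(x) ∧ h for x < 0, C_h(f,g)(0) = (lim_{u↑0} f(u)) ∧ h, and C_h(f,g)(x) = g(x) ∨ h for x > 0, where ∧ is min and ∨ is max. Suppose f_n, f ∈ M(−∞,0) with ∫_K (f_n(x) − f(x))² dx → 0 for every compact set K ⊂ (−∞,0), and g_n, g ∈ M(0,∞) with ∫_K (g_n(x) − g(x))² dx → 0 for every compact set K ⊂ (0,∞). Then ∫_K (C_h(f_n,g_n)(x) − C_h(f,g)(x))² dx → 0 for every compact set K ⊂ ℝ; in particular ∫_{[a,b]} (C_h(f_n,g_n)(x) − C_h(f,g)(x))² dx → 0 for all a < 0 < b. That is, C_h is continuous from (M(−∞,0) × M(0,∞), L²_loc × L²_loc) to (M(−∞,∞), L²_loc). -/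

import Mathlib

open Filter Set MeasureTheory

noncomputable def concat (h : ℝ) (f g : ℝ → ℝ) : ℝ → ℝ := fun x =>
  if x < 0 then min (f x) h
  else if x = 0 then min (sSup (f '' Set.Iio 0)) h
  else max (g x) h

lemma abs_min_sub_min_le_abs' (a b c : ℝ) : |min a c - min b c| ≤ |a - b| := by
  simpa using abs_min_sub_min_le_max a c b c

lemma sq_diff_integrableOn {φ ψ : ℝ → ℝ} {a b : ℝ}
    (hφ : MonotoneOn φ (Icc a b)) (hψ : MonotoneOn ψ (Icc a b)) :
    IntegrableOn (fun x => (φ x - ψ x) ^ 2) (Icc a b) := by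
  rcases le_or_gt a b with hab | hab
  · have hs : MeasurableSet (Icc a b) := measurableSet_Icc
    have hmφ : AEMeasurable φ (volume.restrict (Icc a b)) :=
      aemeasurable_restrict_of_monotoneOn hs hφ
    have hmψ : AEMeasurable ψ (volume.restrict (Icc a b)) :=
      aemeasurable_restrict_of_monotoneOn hs hψ
    have hm : AEMeasurable (fun x => (φ x - ψ x) ^ 2) (volume.restrict (Icc a b)) :=
      (hmφ.sub hmψ).pow_const 2
    set C : ℝ := (|φ a| + |φ b| + |ψ a| + |ψ b|) ^ 2 with hC
    have hconst : IntegrableOn (fun _ : ℝ => C) (Icc a b) := by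
      refine integrableOn_const ?_
      exact measure_Icc_lt_top.ne
    refine Integrable.mono' hconst hm.aestronglyMeasurable ?_
    refine (ae_restrict_iff' hs).2 (ae_of_all _ fun x hx => ?_)
    have haa : a ∈ Icc a b := ⟨le_rfl, hab⟩
    have hbb : b ∈ Icc a b := ⟨hab, le_rfl⟩
    have h1 : φ a ≤ φ x := hφ haa hx hx.1
    have h2 : φ x ≤ φ b := hφ hx hbb hx.2
    have h3 : ψ a ≤ ψ x := hψ haa hx hx.1
    have h4 : ψ x ≤ ψ b := hψ hx hbb hx.2
    have habs : |φ x - ψ x| ≤ |φ a| + |φ b| + |ψ a| + |ψ b| := by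
      rw [abs_sub_le_iff]
      constructor <;>
        · have := le_abs_self (φ a); have := le_abs_self (φ b)
          have := le_abs_self (ψ a); have := le_abs_self (ψ b)
          have := neg_abs_le (φ a); have := neg_abs_le (φ b)
          have := neg_abs_le (ψ a); have := neg_abs_le (ψ b)
          linarith
    have : ‖(φ x - ψ x) ^ 2‖ = |φ x - ψ x| ^ 2 := by
      rw [Real.norm_eq_abs, abs_pow, sq_abs, ← sq_abs]
    rw [this, hC]
    exact pow_le_pow_left₀ (abs_nonneg _) habs 2
  · simp [Icc_eq_empty_of_lt hab, IntegrableOn]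

lemma concat_aemeasurable (h : ℝ) {f g : ℝ → ℝ} (hf : MonotoneOn f (Iio 0))
    (hg : MonotoneOn g (Ioi 0)) : AEMeasurable (concat h f g) volume := by
  have h1 : AEMeasurable (concat h f g) (volume.restrict (Iio 0)) := by
    refine aemeasurable_restrict_of_monotoneOn measurableSet_Iio ?_
    intro x hx y hy hxy
    simp only [concat, if_pos (mem_Iio.mp hx), if_pos (mem_Iio.mp hy)]
    exact min_le_min (hf hx hy hxy) le_rfl
  have h2 : AEMeasurable (concat h f g) (volume.restrict (Ioi 0)) := by
    refine aemeasurable_restrict_of_monotoneOn measurableSet_Ioi ?_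
    intro x hx y hy hxy
    have hx0 : (0:ℝ) < x := mem_Ioi.mp hx
    have hy0 : (0:ℝ) < y := mem_Ioi.mp hy
    simp only [concat, if_neg (not_lt.2 hx0.le), if_neg (not_lt.2 hy0.le),
      if_neg (ne_of_gt hx0), if_neg (ne_of_gt hy0)]
    exact max_le_max (hg hx hy hxy) le_rfl
  have h3 : AEMeasurable (concat h f g) (volume.restrict ({0} : Set ℝ)) := by
    have : volume.restrict ({0} : Set ℝ) = 0 := by
      simp [Measure.restrict_eq_zero]
    rw [this]
    exact aemeasurable_zero_measure
  have h4 : AEMeasurable (concat h f g) (volume.restrict (Iio 0 ∪ ({0} ∪ Ioi 0))) := by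
    rw [aemeasurable_union_iff]
    exact ⟨h1, aemeasurable_union_iff.2 ⟨h3, h2⟩⟩
  have hset : (Iio 0 ∪ ({0} ∪ Ioi 0) : Set ℝ) = univ := by
    ext x
    simp only [mem_union, mem_Iio, mem_singleton_iff, mem_Ioi, mem_univ, iff_true]
    rcases lt_trichotomy x 0 with h | h | h
    · exact Or.inl h
    · exact Or.inr (Or.inl h)
    · exact Or.inr (Or.inr h)
  rwa [hset, Measure.restrict_univ] at h4

theorem stmt_8 (h : ℝ) (f : ℕ → ℝ → ℝ) (f₀ : ℝ → ℝ) (g : ℕ → ℝ → ℝ) (g₀ : ℝ → ℝ)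
    (hfmono : ∀ n, MonotoneOn (f n) (Set.Iio 0)) (hf₀mono : MonotoneOn f₀ (Set.Iio 0))
    (hflc : ∀ n, ∀ x : ℝ, x < 0 → Tendsto (f n) (nhdsWithin x (Set.Iio x)) (nhds (f n x)))
    (hf₀lc : ∀ x : ℝ, x < 0 → Tendsto f₀ (nhdsWithin x (Set.Iio x)) (nhds (f₀ x)))
    (hgmono : ∀ n, MonotoneOn (g n) (Set.Ioi 0)) (hg₀mono : MonotoneOn g₀ (Set.Ioi 0))
    (hglc : ∀ n, ∀ x : ℝ, 0 < x → Tendsto (g n) (nhdsWithin x (Set.Iio x)) (nhds (g n x)))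
    (hg₀lc : ∀ x : ℝ, 0 < x → Tendsto g₀ (nhdsWithin x (Set.Iio x)) (nhds (g₀ x)))
    (hfconv : ∀ K : Set ℝ, IsCompact K → K ⊆ Set.Iio 0 →
      Tendsto (fun n => ∫ x in K, (f n x - f₀ x) ^ 2) atTop (nhds 0))
    (hgconv : ∀ K : Set ℝ, IsCompact K → K ⊆ Set.Ioi 0 →
      Tendsto (fun n => ∫ x in K, (g n x - g₀ x) ^ 2) atTop (nhds 0)) :
    (∀ K : Set ℝ, IsCompact K →
      Tendsto (fun n => ∫ x in K, (concat h (f n) (g n) x - concat h f₀ g₀ x) ^ 2)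
        atTop (nhds 0)) ∧
    (∀ a b : ℝ, a < 0 → 0 < b →
      Tendsto (fun n => ∫ x in Set.Icc a b,
          (concat h (f n) (g n) x - concat h f₀ g₀ x) ^ 2)
        atTop (nhds 0)) := by
  -- eventual bound on f n (-1)
  have hm10 : (-1:ℝ) ∈ Iio (0:ℝ) := by norm_num
  have hm20 : (-2:ℝ) ∈ Iio (0:ℝ) := by norm_num
  have h10 : (1:ℝ) ∈ Ioi (0:ℝ) := by norm_num
  have h20 : (2:ℝ) ∈ Ioi (0:ℝ) := by norm_num
  have hIcc21 : Icc (-2:ℝ) (-1) ⊆ Iio 0 := fun x hx => lt_of_le_of_lt hx.2 (by norm_num)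
  have hIcc12 : Icc (1:ℝ) 2 ⊆ Ioi 0 := fun x hx => lt_of_lt_of_le (by norm_num) hx.1
  have hEf : ∀ᶠ n in atTop, f₀ (-2) - 1 ≤ f n (-1) := by
    have ht := (hfconv (Icc (-2) (-1)) isCompact_Icc hIcc21).eventually
      (eventually_lt_nhds (show (0:ℝ) < 1 by norm_num))
    filter_upwards [ht] with n hn
    by_contra hcon
    push_neg at hcon
    have hone : (1:ℝ) ≤ ∫ x in Icc (-2:ℝ) (-1), (f n x - f₀ x) ^ 2 := by
      have hconst : ∫ x in Icc (-2:ℝ) (-1), (1:ℝ) = 1 := by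
        rw [setIntegral_const, Real.volume_real_Icc]
        norm_num
      refine le_trans (le_of_eq hconst.symm) ?_
      refine setIntegral_mono_on (integrableOn_const measure_Icc_lt_top.ne)
        (sq_diff_integrableOn ((hfmono n).mono hIcc21) (hf₀mono.mono hIcc21))
        measurableSet_Icc ?_
      intro x hx
      have ha : f n x ≤ f n (-1) := hfmono n (hIcc21 hx) hm10 hx.2
      have hb : f₀ (-2) ≤ f₀ x := hf₀mono hm20 (hIcc21 hx) hx.1
      nlinarith
    linarith
  have hEg : ∀ᶠ n in atTop, g n 1 ≤ g₀ 2 + 1 := by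
    have ht := (hgconv (Icc 1 2) isCompact_Icc hIcc12).eventually
      (eventually_lt_nhds (show (0:ℝ) < 1 by norm_num))
    filter_upwards [ht] with n hn
    by_contra hcon
    push_neg at hcon
    have hone : (1:ℝ) ≤ ∫ x in Icc (1:ℝ) 2, (g n x - g₀ x) ^ 2 := by
      have hconst : ∫ x in Icc (1:ℝ) 2, (1:ℝ) = 1 := by
        rw [setIntegral_const, Real.volume_real_Icc]
        norm_num
      refine le_trans (le_of_eq hconst.symm) ?_
      refine setIntegral_mono_on (integrableOn_const measure_Icc_lt_top.ne)
        (sq_diff_integrableOn ((hgmono n).mono hIcc12) (hg₀mono.mono hIcc12))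
        measurableSet_Icc ?_
      intro x hx
      have ha : g n 1 ≤ g n x := hgmono n h10 (hIcc12 hx) hx.1
      have hb : g₀ x ≤ g₀ 2 := hg₀mono (hIcc12 hx) h20 hx.2
      nlinarith
    linarith
  -- constants
  set L : ℝ := min (f₀ (-2) - 1) 0 with hLdef
  set U : ℝ := max (g₀ 2 + 1) 0 with hUdef
  set C : ℝ := max U h - min L h with hCdef
  have hC0 : 0 ≤ C := by
    have h1 : min L h ≤ h := min_le_right _ _
    have h2 : h ≤ max U h := le_max_right _ _
    simp only [hCdef]; linarith
  -- middle bound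
  have hmid : ∀ φ γ : ℝ → ℝ, MonotoneOn φ (Iio 0) → MonotoneOn γ (Ioi 0) →
      f₀ (-2) - 1 ≤ φ (-1) → γ 1 ≤ g₀ 2 + 1 →
      ∀ x ∈ Icc (-1:ℝ) 1, min L h ≤ concat h φ γ x ∧ concat h φ γ x ≤ max U h := by
    intro φ γ hφ hγ hφ1 hγ1 x hx
    by_cases hx0 : x < 0
    · simp only [concat, if_pos hx0]
      constructor
      · refine min_le_min ?_ le_rfl
        have : φ (-1) ≤ φ x := hφ hm10 hx0 hx.1
        have hL : L ≤ f₀ (-2) - 1 := min_le_left _ _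
        linarith
      · exact le_trans (min_le_right _ _) (le_max_right _ _)
    · by_cases hxe : x = 0
      · simp only [concat, if_neg hx0, if_pos hxe]
        constructor
        · refine min_le_min ?_ le_rfl
          by_cases hbdd : BddAbove (φ '' Iio 0)
          · have : φ (-1) ≤ sSup (φ '' Iio 0) := le_csSup hbdd ⟨-1, hm10, rfl⟩
            have hL : L ≤ f₀ (-2) - 1 := min_le_left _ _
            linarith
          · rw [Real.sSup_of_not_bddAbove hbdd]
            exact min_le_right _ _
        · exact le_trans (min_le_right _ _) (le_max_right _ _)
      · have hx0' : 0 < x := lt_of_le_of_ne (not_lt.1 hx0) (Ne.symm hxe)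
        simp only [concat, if_neg hx0, if_neg hxe]
        constructor
        · exact le_trans (min_le_right _ _) (le_max_right _ _)
        · refine max_le_max ?_ le_rfl
          have : γ x ≤ γ 1 := hγ hx0' h10 hx.2
          have hU : g₀ 2 + 1 ≤ U := le_max_left _ _
          linarith
  have hmid₀ : ∀ x ∈ Icc (-1:ℝ) 1, min L h ≤ concat h f₀ g₀ x ∧ concat h f₀ g₀ x ≤ max U h :=
    hmid f₀ g₀ hf₀mono hg₀mono (by linarith [hf₀mono hm20 hm10 (by norm_num : (-2:ℝ) ≤ -1)])
      (by linarith [hg₀mono h10 h20 (by norm_num : (1:ℝ) ≤ 2)])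
  -- main claim
  have main : ∀ K : Set ℝ, IsCompact K →
      Tendsto (fun n => ∫ x in K, (concat h (f n) (g n) x - concat h f₀ g₀ x) ^ 2)
        atTop (nhds 0) := by
    intro K hK
    obtain ⟨r, hr⟩ := hK.isBounded.subset_closedBall 0
    set M : ℝ := max r 1 with hMdef
    have hM1 : (1:ℝ) ≤ M := le_max_right _ _
    have hKM : K ⊆ Icc (-M) M := by
      intro x hx
      have := hr hx
      rw [Real.closedBall_eq_Icc] at this
      have hrM : r ≤ M := le_max_left r 1
      have hx1 : 0 - r ≤ x := this.1
      have hx2 : x ≤ 0 + r := this.2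
      exact ⟨by linarith, by linarith⟩
    rw [NormedAddCommGroup.tendsto_nhds_zero]
    intro ε hε
    set δ : ℝ := min (min 1 M) (ε / (6 * (C ^ 2 + 1))) with hδdef
    have hδpos : 0 < δ := by
      refine lt_min (lt_min one_pos (lt_of_lt_of_le one_pos hM1)) ?_
      positivity
    have hδ1 : δ ≤ 1 := le_trans (min_le_left _ _) (min_le_left _ _)
    have hδM : δ ≤ M := le_trans (min_le_left _ _) (min_le_right _ _)
    have hδε : δ ≤ ε / (6 * (C ^ 2 + 1)) := min_le_right _ _
    have hsub1 : Icc (-M) (-δ) ⊆ Iio 0 := fun x hx => lt_of_le_of_lt hx.2 (by linarith)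
    have hsub2 : Icc δ M ⊆ Ioi 0 := fun x hx => lt_of_lt_of_le hδpos hx.1
    have hε3 : (0:ℝ) < ε / 3 := by positivity
    have E1 := (hfconv (Icc (-M) (-δ)) isCompact_Icc hsub1).eventually
      (eventually_lt_nhds hε3)
    have E2 := (hgconv (Icc δ M) isCompact_Icc hsub2).eventually
      (eventually_lt_nhds hε3)
    filter_upwards [E1, E2, hEf, hEg] with n h1 h2 h3 h4
    -- middle bound for f n
    have hmidn := hmid (f n) (g n) (hfmono n) (hgmono n) h3 h4
    set D : ℝ → ℝ := fun x => (concat h (f n) (g n) x - concat h f₀ g₀ x) ^ 2 with hDdef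
    set F : ℝ → ℝ := fun x =>
      (Icc (-M) (-δ)).indicator (fun x => (f n x - f₀ x) ^ 2) x +
      (Icc δ M).indicator (fun x => (g n x - g₀ x) ^ 2) x +
      (Icc (-δ) δ).indicator (fun _ => C ^ 2) x with hFdef
    have hi1 : Integrable ((Icc (-M) (-δ)).indicator (fun x => (f n x - f₀ x) ^ 2)) := by
      rw [integrable_indicator_iff measurableSet_Icc]
      exact sq_diff_integrableOn ((hfmono n).mono hsub1) (hf₀mono.mono hsub1)
    have hi2 : Integrable ((Icc δ M).indicator (fun x => (g n x - g₀ x) ^ 2)) := by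
      rw [integrable_indicator_iff measurableSet_Icc]
      exact sq_diff_integrableOn ((hgmono n).mono hsub2) (hg₀mono.mono hsub2)
    have hi3 : Integrable ((Icc (-δ) δ).indicator (fun _ : ℝ => C ^ 2)) := by
      rw [integrable_indicator_iff measurableSet_Icc]
      exact integrableOn_const measure_Icc_lt_top.ne
    have hFint : Integrable F := (hi1.add hi2).add hi3
    have hDleF : ∀ x ∈ Icc (-M) M, D x ≤ F x := by
      intro x hx
      have hn1 : (0:ℝ) ≤ (Icc (-M) (-δ)).indicator (fun x => (f n x - f₀ x) ^ 2) x :=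
        Set.indicator_nonneg (fun y _ => sq_nonneg _) x
      have hn2 : (0:ℝ) ≤ (Icc δ M).indicator (fun x => (g n x - g₀ x) ^ 2) x :=
        Set.indicator_nonneg (fun y _ => sq_nonneg _) x
      have hn3 : (0:ℝ) ≤ (Icc (-δ) δ).indicator (fun _ : ℝ => C ^ 2) x :=
        Set.indicator_nonneg (fun y _ => sq_nonneg _) x
      rcases le_or_gt x (-δ) with hc1 | hc1
      · have hxmem : x ∈ Icc (-M) (-δ) := ⟨hx.1, hc1⟩
        have hx0 : x < 0 := hsub1 hxmem
        have hDle : D x ≤ (f n x - f₀ x) ^ 2 := by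
          simp only [hDdef, concat, if_pos hx0]
          have habs := abs_min_sub_min_le_abs' (f n x) (f₀ x) h
          calc (min (f n x) h - min (f₀ x) h) ^ 2
              = |min (f n x) h - min (f₀ x) h| ^ 2 := (sq_abs _).symm
            _ ≤ |f n x - f₀ x| ^ 2 := pow_le_pow_left₀ (abs_nonneg _) habs 2
            _ = (f n x - f₀ x) ^ 2 := sq_abs _
        have : F x = (f n x - f₀ x) ^ 2 +
            (Icc δ M).indicator (fun x => (g n x - g₀ x) ^ 2) x +
            (Icc (-δ) δ).indicator (fun _ : ℝ => C ^ 2) x := by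
          simp only [hFdef, Set.indicator_of_mem hxmem]
        rw [this]; linarith
      · rcases lt_or_ge x δ with hc2 | hc2
        · have hxmem : x ∈ Icc (-δ) δ := ⟨hc1.le, hc2.le⟩
          have hxmem1 : x ∈ Icc (-1:ℝ) 1 := ⟨by linarith [hxmem.1], by linarith [hxmem.2]⟩
          have hb1 := hmidn x hxmem1
          have hb2 := hmid₀ x hxmem1
          have habs : |concat h (f n) (g n) x - concat h f₀ g₀ x| ≤ C := by
            rw [abs_le]
            constructor
            · simp only [hCdef]; linarith [hb1.1, hb2.2]
            · simp only [hCdef]; linarith [hb1.2, hb2.1]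
          have hDle : D x ≤ C ^ 2 := by
            simp only [hDdef]
            calc (concat h (f n) (g n) x - concat h f₀ g₀ x) ^ 2
                = |concat h (f n) (g n) x - concat h f₀ g₀ x| ^ 2 := (sq_abs _).symm
              _ ≤ C ^ 2 := pow_le_pow_left₀ (abs_nonneg _) habs 2
          have : F x = (Icc (-M) (-δ)).indicator (fun x => (f n x - f₀ x) ^ 2) x +
              (Icc δ M).indicator (fun x => (g n x - g₀ x) ^ 2) x + C ^ 2 := by
            simp only [hFdef, Set.indicator_of_mem hxmem]
          rw [this]; linarith
        · have hxmem : x ∈ Icc δ M := ⟨hc2, hx.2⟩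
          have hx0 : 0 < x := hsub2 hxmem
          have hDle : D x ≤ (g n x - g₀ x) ^ 2 := by
            simp only [hDdef, concat, if_neg (not_lt.2 hx0.le), if_neg (ne_of_gt hx0)]
            have habs := abs_max_sub_max_le_abs (g n x) (g₀ x) h
            calc (max (g n x) h - max (g₀ x) h) ^ 2
                = |max (g n x) h - max (g₀ x) h| ^ 2 := (sq_abs _).symm
              _ ≤ |g n x - g₀ x| ^ 2 := pow_le_pow_left₀ (abs_nonneg _) habs 2
              _ = (g n x - g₀ x) ^ 2 := sq_abs _
          have : F x = (Icc (-M) (-δ)).indicator (fun x => (f n x - f₀ x) ^ 2) x +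
              (g n x - g₀ x) ^ 2 +
              (Icc (-δ) δ).indicator (fun _ : ℝ => C ^ 2) x := by
            simp only [hFdef, Set.indicator_of_mem hxmem]
          rw [this]; linarith
    have hDmeas : AEStronglyMeasurable D (volume.restrict (Icc (-M) M)) := by
      have hc1 := (concat_aemeasurable h (hfmono n) (hgmono n)).restrict
        (s := Icc (-M) M)
      have hc0 := (concat_aemeasurable h hf₀mono hg₀mono).restrict (s := Icc (-M) M)
      exact ((hc1.sub hc0).pow_const 2).aestronglyMeasurable
    have hDint : IntegrableOn D (Icc (-M) M) := by
      refine Integrable.mono' hFint.integrableOn hDmeas ?_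
      refine (ae_restrict_iff' measurableSet_Icc).2 (ae_of_all _ fun x hx => ?_)
      rw [Real.norm_eq_abs, abs_of_nonneg (sq_nonneg _)]
      exact hDleF x hx
    have step1 : ∫ x in K, D x ≤ ∫ x in Icc (-M) M, D x := by
      refine setIntegral_mono_set hDint ?_ (HasSubset.Subset.eventuallyLE hKM)
      exact ae_of_all _ fun x => sq_nonneg _
    have step2 : ∫ x in Icc (-M) M, D x ≤ ∫ x in Icc (-M) M, F x :=
      setIntegral_mono_on hDint hFint.integrableOn measurableSet_Icc hDleF
    have hsubA : Icc (-M) (-δ) ⊆ Icc (-M) M := Icc_subset_Icc le_rfl (by linarith)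
    have hsubB : Icc δ M ⊆ Icc (-M) M := Icc_subset_Icc (by linarith) le_rfl
    have hsubC : Icc (-δ) δ ⊆ Icc (-M) M := Icc_subset_Icc (by linarith) (by linarith)
    have step3 : ∫ x in Icc (-M) M, F x =
        (∫ x in Icc (-M) (-δ), (f n x - f₀ x) ^ 2) +
        (∫ x in Icc δ M, (g n x - g₀ x) ^ 2) +
        (∫ x in Icc (-δ) δ, (C ^ 2 : ℝ)) := by
      have hi12 : Integrable (fun x => (Icc (-M) (-δ)).indicator (fun x => (f n x - f₀ x) ^ 2) x +
          (Icc δ M).indicator (fun x => (g n x - g₀ x) ^ 2) x) := hi1.add hi2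
      simp only [hFdef]
      rw [integral_add (hi12.integrableOn) (hi3.integrableOn),
        integral_add (hi1.integrableOn) (hi2.integrableOn),
        setIntegral_indicator measurableSet_Icc,
        setIntegral_indicator measurableSet_Icc,
        setIntegral_indicator measurableSet_Icc,
        inter_eq_self_of_subset_right hsubA,
        inter_eq_self_of_subset_right hsubB,
        inter_eq_self_of_subset_right hsubC]
    have step4 : ∫ x in Icc (-δ) δ, (C ^ 2 : ℝ) ≤ ε / 3 := by
      rw [setIntegral_const, Real.volume_real_Icc, smul_eq_mul,
        max_eq_left (by linarith : (0:ℝ) ≤ δ - -δ)]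
      have hkey : (δ - -δ) * C ^ 2 ≤ 2 * δ * (C ^ 2 + 1) := by nlinarith [sq_nonneg C]
      have hkey2 : 2 * δ * (C ^ 2 + 1) ≤ ε / 3 := by
        have hd : (0:ℝ) < 6 * (C ^ 2 + 1) := by positivity
        rw [le_div_iff₀ hd] at hδε
        calc 2 * δ * (C ^ 2 + 1) = (δ * (6 * (C ^ 2 + 1))) / 3 := by ring
          _ ≤ ε / 3 := by gcongr
      linarith
    have hnonneg : (0:ℝ) ≤ ∫ x in K, D x :=
      integral_nonneg fun x => sq_nonneg _
    rw [Real.norm_eq_abs, abs_of_nonneg hnonneg]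
    calc ∫ x in K, D x ≤ ∫ x in Icc (-M) M, F x := le_trans step1 step2
      _ = _ := step3
      _ < ε / 3 + ε / 3 + ε / 3 := by
        have := le_of_lt h1
        linarith [h1, h2, step4]
      _ = ε := by ring
  exact ⟨main, fun a b ha hb => main (Icc a b) isCompact_Icc⟩
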